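/- For every integer k ≥ 1, if G is a graph without isolated vertices, then γₖᵗ(G) ≥ subₖᵗ(G), where subₖᵗ(G) is the smallest integer j such that the sum of the j largest k-degrees of vertices of G is at least the order n of G. -/
import Mathlib


open SimpleGraph

/-- `S` is a total (distance) `k`-dominating set of `G`: every vertex `v` is within
distance `k` of some vertex of `S` different from `v`. -/
def TotalKDomSet {V : Type*} (G : SimpleGraph V) (k : ℕ) (S : Set V) : Prop :=
  ∀ v : V, ∃ w ∈ S, w ≠ v ∧ G.Reachable v w ∧ G.dist v w ≤ k

/-- The total (distance) `k`-domination number `γₖᵗ(G)`. -/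
noncomputable def totalKDomNum {V : Type*} (G : SimpleGraph V) (k : ℕ) : ℕ :=
  sInf {m | ∃ S : Set V, TotalKDomSet G k S ∧ S.ncard = m}
/-- The sub-total `k`-domination number: the least `j` such that the sum of the `j`
largest `k`-degrees is at least `n`.  (The sum of the `j` largest `k`-degrees is the
maximum of `∑ v ∈ A, d_{G,k}(v)` over sets `A` of `j` vertices.) -/
noncomputable def subTotalKDomNum {V : Type*} [Fintype V] (G : SimpleGraph V) (k : ℕ) : ℕ :=
  sInf {j | ∃ A : Finset V, A.card = j ∧
    Fintype.card V ≤ ∑ v ∈ A, ({w | w ≠ v ∧ G.Reachable v w ∧ G.dist v w ≤ k} : Set V).ncard}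

theorem totalKDomNum_ge_subTotalKDomNum {V : Type*} [Fintype V]
    (k : ℕ) (hk : 1 ≤ k) (G : SimpleGraph V) (hG : ∀ v : V, ∃ w : V, G.Adj v w) :
    subTotalKDomNum G k ≤ totalKDomNum G k := by
  classical
  -- The defining set of totalKDomNum is nonempty: take S = univ.
  have hne : {m | ∃ S : Set V, TotalKDomSet G k S ∧ S.ncard = m}.Nonempty := by
    refine ⟨(Set.univ : Set V).ncard, Set.univ, ?_, rfl⟩
    intro v
    obtain ⟨w, hw⟩ := hG v
    refine ⟨w, Set.mem_univ w, hw.ne', hw.reachable, ?_⟩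
    calc G.dist v w ≤ (SimpleGraph.Walk.cons hw SimpleGraph.Walk.nil).length :=
          SimpleGraph.dist_le _
      _ = 1 := rfl
      _ ≤ k := hk
  obtain ⟨S, hS, hScard⟩ := Nat.sInf_mem hne
  -- It suffices to show totalKDomNum is in the set defining subTotalKDomNum.
  apply Nat.sInf_le
  refine ⟨S.toFinset, by rw [← Set.ncard_eq_toFinset_card']; exact hScard, ?_⟩
  -- Balls around S cover V.
  have hcover : (Finset.univ : Finset V) ⊆
      S.toFinset.biUnion (fun v => ({w | w ≠ v ∧ G.Reachable v w ∧ G.dist v w ≤ k} : Set V).toFinset) := by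
    intro u _
    obtain ⟨w, hwS, hwne, hwr, hwd⟩ := hS u
    simp only [Finset.mem_biUnion, Set.mem_toFinset]
    exact ⟨w, hwS, hwne.symm, hwr.symm, by rwa [SimpleGraph.dist_comm]⟩
  calc Fintype.card V
      = (Finset.univ : Finset V).card := rfl
    _ ≤ (S.toFinset.biUnion (fun v => ({w | w ≠ v ∧ G.Reachable v w ∧ G.dist v w ≤ k} : Set V).toFinset)).card :=
        Finset.card_le_card hcover
    _ ≤ ∑ v ∈ S.toFinset, ({w | w ≠ v ∧ G.Reachable v w ∧ G.dist v w ≤ k} : Set V).toFinset.card :=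
        Finset.card_biUnion_le
    _ = ∑ v ∈ S.toFinset, ({w | w ≠ v ∧ G.Reachable v w ∧ G.dist v w ≤ k} : Set V).ncard := by
        simp [Set.ncard_eq_toFinset_card']
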